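/- For every t > 0, the entrywise improper integral ∫_t^∞ φ(u)·φ(u)ᵀ du converges, and α_t = ∫_t^∞ φ(u)·φ(u)ᵀ du + α_∞, where α_∞ = lim_{s→∞} α_s. -/

import Mathlib

open MeasureTheory Filter Topology Matrix

lemma aux_prod_int {n : ℕ} (f : ℝ → Fin n → ℝ)
    (hf_meas : ∀ i, Measurable fun s => f s i)
    (hf_loc : ∀ i, ∀ t > (0 : ℝ), IntegrableOn (fun s => (f s i) ^ 2) (Set.Ioc 0 t))
    (i j : Fin n) (a b : ℝ) (ha : 0 ≤ a) :
    IntegrableOn (fun s => f s i * f s j) (Set.Ioc a b) := by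
  rcases le_or_gt b 0 with hb | hb
  · rw [Set.Ioc_eq_empty (not_lt.mpr (hb.trans ha))]
    exact integrableOn_empty
  · have hmono : Set.Ioc a b ⊆ Set.Ioc 0 b := Set.Ioc_subset_Ioc ha le_rfl
    refine IntegrableOn.mono_set ?_ hmono
    refine Integrable.mono' ((hf_loc i b hb).add (hf_loc j b hb))
      ((hf_meas i).mul (hf_meas j)).aestronglyMeasurable ?_
    filter_upwards with u
    rw [Real.norm_eq_abs]
    have : |f u i * f u j| ≤ f u i ^ 2 + f u j ^ 2 :=
      abs_le.mpr ⟨by nlinarith [sq_nonneg (f u i + f u j)], by nlinarith [sq_nonneg (f u i - f u j)]⟩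
    simpa using this

lemma aux_mdiff {n : ℕ} (f : ℝ → Fin n → ℝ)
    (hf_meas : ∀ i, Measurable fun s => f s i)
    (hf_loc : ∀ i, ∀ t > (0 : ℝ), IntegrableOn (fun s => (f s i) ^ 2) (Set.Ioc 0 t))
    (m : ℝ → Matrix (Fin n) (Fin n) ℝ)
    (hm : ∀ t, m t = Matrix.of fun i j => ∫ s in Set.Ioc 0 t, f s i * f s j)
    (a b : ℝ) (ha : 0 ≤ a) (hab : a ≤ b) (i j : Fin n) :
    m b i j = m a i j + ∫ v in Set.Ioc a b, f v i * f v j := by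
  rw [hm, hm]
  simp only [Matrix.of_apply]
  rw [← Set.Ioc_union_Ioc_eq_Ioc ha hab,
    setIntegral_union (Set.Ioc_disjoint_Ioc_of_le le_rfl) measurableSet_Ioc
      (aux_prod_int f hf_meas hf_loc i j 0 a le_rfl)
      (aux_prod_int f hf_meas hf_loc i j a b ha)]

lemma aux_det_cont {n : ℕ} {S : Set ℝ} (M : ℝ → Matrix (Fin n) (Fin n) ℝ)
    (hM : ∀ i j, ContinuousOn (fun u => M u i j) S) :
    ContinuousOn (fun u => (M u).det) S := by
  simp only [Matrix.det_apply']
  refine continuousOn_finset_sum _ (fun σ _ => ContinuousOn.mul continuousOn_const ?_)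
  exact continuousOn_finset_prod _ (fun k _ => hM (σ k) k)

lemma aux_cont {n : ℕ} (f : ℝ → Fin n → ℝ)
    (hf_meas : ∀ i, Measurable fun s => f s i)
    (hf_loc : ∀ i, ∀ t > (0 : ℝ), IntegrableOn (fun s => (f s i) ^ 2) (Set.Ioc 0 t))
    (m : ℝ → Matrix (Fin n) (Fin n) ℝ)
    (hm : ∀ t, m t = Matrix.of fun i j => ∫ s in Set.Ioc 0 t, f s i * f s j)
    (hm_inv : ∀ t > (0 : ℝ), IsUnit (m t))
    (α : ℝ → Matrix (Fin n) (Fin n) ℝ)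
    (hα : ∀ t, α t = (m t)⁻¹)
    (t : ℝ) (ht : 0 < t) (i j : Fin n) :
    ContinuousOn (fun u => α u i j) (Set.Ici t) := by
  -- continuity of entries of m on Ici t
  have hmc : ∀ i j, ContinuousOn (fun u => m u i j) (Set.Ici t) := by
    intro i j u hu
    have hu' : t ≤ u := hu
    have hub : u < u + 1 := by linarith
    have hint : IntegrableOn (fun v => f v i * f v j) (Set.Icc t (u + 1)) := by
      refine IntegrableOn.mono_set (aux_prod_int f hf_meas hf_loc i j 0 (u + 1) le_rfl) ?_
      intro x hx; exact ⟨lt_of_lt_of_le ht hx.1, hx.2⟩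
    have hprim := intervalIntegral.continuousOn_primitive (a := t) (b := u + 1) hint
    have hmem : u ∈ Set.Icc t (u + 1) := ⟨hu', hub.le⟩
    have hcw : ContinuousWithinAt (fun x => m t i j + ∫ v in Set.Ioc t x, f v i * f v j)
        (Set.Icc t (u + 1)) u := ContinuousWithinAt.add continuousWithinAt_const (hprim u hmem)
    have heq : ∀ x ∈ Set.Icc t (u + 1), m x i j
        = m t i j + ∫ v in Set.Ioc t x, f v i * f v j := fun x hx =>
      aux_mdiff f hf_meas hf_loc m hm t x ht.le hx.1 i j
    have hcw2 : ContinuousWithinAt (fun x => m x i j) (Set.Icc t (u + 1)) u :=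
      hcw.congr heq (heq u hmem)
    refine hcw2.mono_of_mem_nhdsWithin ?_
    rw [show Set.Icc t (u + 1) = Set.Ici t ∩ Set.Iic (u + 1) from rfl]
    exact inter_mem_nhdsWithin _ (Iic_mem_nhds hub)
  -- determinant nonvanishing on Ici t
  have hdetne : ∀ u ∈ Set.Ici t, (m u).det ≠ 0 := by
    intro u hu
    exact IsUnit.ne_zero ((Matrix.isUnit_iff_isUnit_det _).mp (hm_inv u (lt_of_lt_of_le ht hu)))
  have hdetc : ContinuousOn (fun u => (m u).det) (Set.Ici t) := aux_det_cont m hmc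
  -- adjugate entry continuity
  have hadjc : ContinuousOn (fun u => (m u).adjugate i j) (Set.Ici t) := by
    simp only [Matrix.adjugate_apply]
    refine aux_det_cont _ ?_
    intro k l
    by_cases hk : k = j
    · simp only [hk, Matrix.updateRow_self]
      exact continuousOn_const
    · simp only [Matrix.updateRow_ne hk]
      exact hmc k l
  have : ∀ u ∈ Set.Ici t, α u i j = ((m u).det)⁻¹ * (m u).adjugate i j := by
    intro u hu
    rw [hα, Matrix.inv_def, Ring.inverse_eq_inv, Matrix.smul_apply, smul_eq_mul]
  exact ContinuousOn.congr ((hdetc.inv₀ hdetne).mul hadjc) this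

lemma aux_step {n : ℕ} (f : ℝ → Fin n → ℝ)
    (hf_meas : ∀ i, Measurable fun s => f s i)
    (hf_loc : ∀ i, ∀ t > (0 : ℝ), IntegrableOn (fun s => (f s i) ^ 2) (Set.Ioc 0 t))
    (m : ℝ → Matrix (Fin n) (Fin n) ℝ)
    (hm : ∀ t, m t = Matrix.of fun i j => ∫ s in Set.Ioc 0 t, f s i * f s j)
    (hm_inv : ∀ t > (0 : ℝ), IsUnit (m t))
    (α : ℝ → Matrix (Fin n) (Fin n) ℝ)
    (hα : ∀ t, α t = (m t)⁻¹)
    (a b : ℝ) (ha : 0 < a) (hab : a ≤ b) (i j : Fin n) :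
    α a i j - α b i j
      = ∫ u in Set.Ioc a b, (α a).mulVec (f u) i * Matrix.vecMul (f u) (α b) j := by
  have hb : 0 < b := lt_of_lt_of_le ha hab
  have h1 : α a * m a = 1 := by
    rw [hα]; exact Matrix.nonsing_inv_mul _ ((Matrix.isUnit_iff_isUnit_det _).mp (hm_inv a ha))
  have h2 : m b * α b = 1 := by
    rw [hα]; exact Matrix.mul_nonsing_inv _ ((Matrix.isUnit_iff_isUnit_det _).mp (hm_inv b hb))
  have halg : α a - α b = α a * (m b - m a) * α b := by
    rw [Matrix.mul_sub, Matrix.sub_mul, Matrix.mul_assoc, h2, Matrix.mul_one, h1, Matrix.one_mul]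
  have hint : ∀ p q : Fin n,
      IntegrableOn (fun u => (α a i p * α b q j) * (f u p * f u q)) (Set.Ioc a b) :=
    fun p q => (aux_prod_int f hf_meas hf_loc p q a b ha.le).const_mul _
  have hpoint : ∀ u : ℝ, (α a).mulVec (f u) i * Matrix.vecMul (f u) (α b) j
      = ∑ p, ∑ q, (α a i p * α b q j) * (f u p * f u q) := by
    intro u
    simp only [Matrix.mulVec, Matrix.vecMul, dotProduct, Finset.sum_mul_sum]
    exact Finset.sum_congr rfl fun p _ => Finset.sum_congr rfl fun q _ => by ring
  have hswap : (∫ u in Set.Ioc a b, ∑ p, ∑ q, (α a i p * α b q j) * (f u p * f u q))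
      = ∑ p, ∑ q, (α a i p * α b q j) * (∫ u in Set.Ioc a b, f u p * f u q) := by
    rw [integral_finset_sum _ (fun p _ => integrable_finset_sum _ (fun q _ => hint p q))]
    refine Finset.sum_congr rfl fun p _ => ?_
    rw [integral_finset_sum _ (fun q _ => hint p q)]
    exact Finset.sum_congr rfl fun q _ => integral_const_mul _ _
  calc α a i j - α b i j = (α a * (m b - m a) * α b) i j := by
        rw [← halg]; simp [Matrix.sub_apply]
    _ = ∑ q, ∑ p, α a i p * (m b - m a) p q * α b q j := by
        simp only [Matrix.mul_apply, Finset.sum_mul]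
    _ = ∑ p, ∑ q, (α a i p * α b q j) * (∫ u in Set.Ioc a b, f u p * f u q) := by
        rw [Finset.sum_comm]
        refine Finset.sum_congr rfl fun p _ => Finset.sum_congr rfl fun q _ => ?_
        have hmb : (m b - m a) p q = ∫ u in Set.Ioc a b, f u p * f u q := by
          rw [Matrix.sub_apply, aux_mdiff f hf_meas hf_loc m hm a b ha.le hab p q]; ring
        rw [hmb]; ring
    _ = ∫ u in Set.Ioc a b, ∑ p, ∑ q, (α a i p * α b q j) * (f u p * f u q) := hswap.symm
    _ = ∫ u in Set.Ioc a b, (α a).mulVec (f u) i * Matrix.vecMul (f u) (α b) j :=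
        integral_congr_ae (Filter.Eventually.of_forall fun u => (hpoint u).symm)

lemma aux_key {n : ℕ} (f : ℝ → Fin n → ℝ)
    (hf_meas : ∀ i, Measurable fun s => f s i)
    (hf_loc : ∀ i, ∀ t > (0 : ℝ), IntegrableOn (fun s => (f s i) ^ 2) (Set.Ioc 0 t))
    (m : ℝ → Matrix (Fin n) (Fin n) ℝ)
    (hm : ∀ t, m t = Matrix.of fun i j => ∫ s in Set.Ioc 0 t, f s i * f s j)
    (hm_inv : ∀ t > (0 : ℝ), IsUnit (m t))
    (α : ℝ → Matrix (Fin n) (Fin n) ℝ)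
    (hα : ∀ t, α t = (m t)⁻¹)
    (t s : ℝ) (ht : 0 < t) (hts : t < s) (i j : Fin n) :
    IntegrableOn (fun u => (α u).mulVec (f u) i * Matrix.vecMul (f u) (α u) j) (Set.Ioc t s)
      ∧ α t i j - α s i j
        = ∫ u in Set.Ioc t s, (α u).mulVec (f u) i * Matrix.vecMul (f u) (α u) j := by
  set δ : ℕ → ℝ := fun k => (s - t) / (k + 1) with hδdef
  have hδpos : ∀ k : ℕ, 0 < δ k := fun k => div_pos (by linarith) (by positivity)
  have hδtot : ∀ k : ℕ, ((k : ℝ) + 1) * δ k = s - t := by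
    intro k
    have : ((k : ℝ) + 1) ≠ 0 := by positivity
    show ((k : ℝ) + 1) * ((s - t) / ((k : ℝ) + 1)) = s - t
    field_simp
  set pt : ℕ → ℝ → ℝ := fun k u => t + ((⌈(u - t) / δ k⌉₊ - 1 : ℕ) : ℝ) * δ k with hptdef
  have hceil : ∀ (k : ℕ) (u : ℝ), u ∈ Set.Ioc t s →
      t ≤ pt k u ∧ u - δ k ≤ pt k u ∧ pt k u < u ∧ u ≤ pt k u + δ k ∧ pt k u + δ k ≤ s := by
    intro k u hu
    have hD := hδpos k
    set x := (u - t) / δ k with hxdef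
    have hx0 : 0 < x := div_pos (by linarith [hu.1]) hD
    have hxD : x * δ k = u - t := div_mul_cancel₀ _ (ne_of_gt hD)
    have hxk : x ≤ (k : ℝ) + 1 := by
      rw [hxdef, div_le_iff₀ hD]
      nlinarith [hu.2, hδtot k]
    have hc1 : 1 ≤ ⌈x⌉₊ := Nat.one_le_ceil_iff.mpr hx0
    have hcast : ((⌈x⌉₊ - 1 : ℕ) : ℝ) = (⌈x⌉₊ : ℝ) - 1 := by
      rw [Nat.cast_sub hc1, Nat.cast_one]
    have h1 : (⌈x⌉₊ : ℝ) - 1 < x := by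
      have := Nat.ceil_lt_add_one hx0.le
      linarith
    have h2 : x ≤ (⌈x⌉₊ : ℝ) := Nat.le_ceil x
    have h3 : (⌈x⌉₊ : ℝ) ≤ (k : ℝ) + 1 := by
      have : ⌈x⌉₊ ≤ k + 1 := Nat.ceil_le.mpr (by push_cast; exact hxk)
      exact_mod_cast this
    have hc1' : (1 : ℝ) ≤ (⌈x⌉₊ : ℝ) := by exact_mod_cast hc1
    have hpt : pt k u = t + ((⌈x⌉₊ : ℝ) - 1) * δ k := by
      rw [← hcast]
    refine ⟨?_, ?_, ?_, ?_, ?_⟩ <;> rw [hpt]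
    · nlinarith
    · nlinarith [mul_le_mul_of_nonneg_right h2 hD.le]
    · nlinarith [mul_lt_mul_of_pos_right h1 hD]
    · nlinarith [mul_le_mul_of_nonneg_right h2 hD.le]
    · nlinarith [mul_le_mul_of_nonneg_right h3 hD.le, hδtot k]
  have hpiece : ∀ (k jj : ℕ) (u : ℝ),
      u ∈ Set.Ioc (t + (jj : ℝ) * δ k) (t + ((jj : ℝ) + 1) * δ k) →
      pt k u = t + (jj : ℝ) * δ k := by
    intro k jj u hu
    have hD := hδpos k
    have hlow : (jj : ℝ) < (u - t) / δ k := by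
      rw [lt_div_iff₀ hD]; linarith [hu.1]
    have hhigh : (u - t) / δ k ≤ (jj : ℝ) + 1 := by
      rw [div_le_iff₀ hD]; nlinarith [hu.2]
    have hceq : ⌈(u - t) / δ k⌉₊ = jj + 1 := by
      rw [Nat.ceil_eq_iff (Nat.succ_ne_zero jj)]
      constructor
      · simpa using hlow
      · push_cast; exact hhigh
    rw [hptdef]
    simp only [hceq, Nat.add_sub_cancel]
  have hcover : ∀ k : ℕ, Set.Ioc t s =
      ⋃ jj ∈ Finset.range (k + 1),
        Set.Ioc (t + (jj : ℝ) * δ k) (t + ((jj : ℝ) + 1) * δ k) := by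
    intro k
    ext u
    simp only [Set.mem_iUnion, Finset.mem_range, exists_prop]
    constructor
    · intro hu
      obtain ⟨hp1, hp2, hp3, hp4, hp5⟩ := hceil k u hu
      refine ⟨⌈(u - t) / δ k⌉₊ - 1, ?_, ?_, ?_⟩
      · have hD := hδpos k
        have hpt_eq : pt k u = t + ((⌈(u - t) / δ k⌉₊ - 1 : ℕ) : ℝ) * δ k := rfl
        have hle : ((⌈(u - t) / δ k⌉₊ - 1 : ℕ) : ℝ) ≤ (k : ℝ) := by
          rw [hpt_eq] at hp5
          nlinarith [hδtot k]
        have : (⌈(u - t) / δ k⌉₊ - 1 : ℕ) ≤ k := by exact_mod_cast hle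
        omega
      · have hpt_eq : pt k u = t + ((⌈(u - t) / δ k⌉₊ - 1 : ℕ) : ℝ) * δ k := rfl
        rw [← hpt_eq]; exact hp3
      · have hpt_eq : pt k u = t + ((⌈(u - t) / δ k⌉₊ - 1 : ℕ) : ℝ) * δ k := rfl
        rw [hpt_eq] at hp4
        linarith
    · rintro ⟨jj, hjj, hu1, hu2⟩
      have hD := hδpos k
      have hjnn : (0 : ℝ) ≤ (jj : ℝ) := Nat.cast_nonneg jj
      have hjk : (jj : ℝ) ≤ (k : ℝ) := by
        exact_mod_cast Nat.lt_succ_iff.mp hjj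
      constructor
      · nlinarith
      · nlinarith [hδtot k]
  have hdisj : ∀ k : ℕ, (↑(Finset.range (k + 1)) : Set ℕ).Pairwise
      (Function.onFun Disjoint
        fun jj => Set.Ioc (t + (jj : ℝ) * δ k) (t + ((jj : ℝ) + 1) * δ k)) := by
    intro k jj _ ll _ hne
    have hD := hδpos k
    rw [Function.onFun, Set.Ioc_disjoint_Ioc]
    rcases lt_or_gt_of_ne hne with h | h
    · have hle : (jj : ℝ) + 1 ≤ (ll : ℝ) := by exact_mod_cast h
      refine le_trans (min_le_left _ _) (le_trans ?_ (le_max_right _ _))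
      nlinarith
    · have hle : (ll : ℝ) + 1 ≤ (jj : ℝ) := by exact_mod_cast h
      refine le_trans (min_le_right _ _) (le_trans ?_ (le_max_left _ _))
      nlinarith
  set G : ℕ → ℝ → ℝ :=
    fun k u => (α (pt k u)).mulVec (f u) i * Matrix.vecMul (f u) (α (pt k u + δ k)) j with hGdef
  have hfix_int : ∀ (a b : ℝ), 0 ≤ a → ∀ (v w : ℝ), IntegrableOn
      (fun u => (α v).mulVec (f u) i * Matrix.vecMul (f u) (α w) j) (Set.Ioc a b) := by
    intro a b haa v w
    have hrw : (fun u => (α v).mulVec (f u) i * Matrix.vecMul (f u) (α w) j)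
        = fun u => ∑ p, ∑ q, (α v i p * α w q j) * (f u p * f u q) := by
      funext u
      simp only [Matrix.mulVec, Matrix.vecMul, dotProduct, Finset.sum_mul_sum]
      exact Finset.sum_congr rfl fun p _ => Finset.sum_congr rfl fun q _ => by ring
    rw [hrw]
    exact integrable_finset_sum _ fun p _ => integrable_finset_sum _ fun q _ =>
      (aux_prod_int f hf_meas hf_loc p q a b haa).const_mul _
  have hpieceG : ∀ k jj : ℕ, Set.EqOn (G k)
      (fun u => (α (t + (jj : ℝ) * δ k)).mulVec (f u) i
        * Matrix.vecMul (f u) (α (t + ((jj : ℝ) + 1) * δ k)) j)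
      (Set.Ioc (t + (jj : ℝ) * δ k) (t + ((jj : ℝ) + 1) * δ k)) := by
    intro k jj u hu
    have h := hpiece k jj u hu
    have h2 : pt k u + δ k = t + ((jj : ℝ) + 1) * δ k := by rw [h]; ring
    simp only [hGdef]
    rw [h2, h]
  have hGintPiece : ∀ k : ℕ, ∀ jj ∈ Finset.range (k + 1),
      IntegrableOn (G k) (Set.Ioc (t + (jj : ℝ) * δ k) (t + ((jj : ℝ) + 1) * δ k)) := by
    intro k jj _
    have ha0 : (0 : ℝ) ≤ t + (jj : ℝ) * δ k := by
      nlinarith [hδpos k, (Nat.cast_nonneg jj : (0:ℝ) ≤ (jj:ℝ))]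
    exact (hfix_int _ _ ha0 _ _).congr_fun (hpieceG k jj).symm measurableSet_Ioc
  have hGint : ∀ k, IntegrableOn (G k) (Set.Ioc t s) := by
    intro k
    rw [hcover k]
    exact integrableOn_finset_iUnion.mpr (hGintPiece k)
  have hGval : ∀ k, (∫ u in Set.Ioc t s, G k u) = α t i j - α s i j := by
    intro k
    rw [hcover k, integral_biUnion_finset _ (fun _ _ => measurableSet_Ioc) (hdisj k)
      (hGintPiece k)]
    have hterm : ∀ jj ∈ Finset.range (k + 1),
        (∫ u in Set.Ioc (t + (jj : ℝ) * δ k) (t + ((jj : ℝ) + 1) * δ k), G k u)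
          = α (t + (jj : ℝ) * δ k) i j - α (t + ((jj : ℝ) + 1) * δ k) i j := by
      intro jj _
      rw [setIntegral_congr_fun measurableSet_Ioc (hpieceG k jj)]
      have ha' : 0 < t + (jj : ℝ) * δ k := by
        nlinarith [hδpos k, (Nat.cast_nonneg jj : (0:ℝ) ≤ (jj:ℝ))]
      have hab' : t + (jj : ℝ) * δ k ≤ t + ((jj : ℝ) + 1) * δ k := by
        nlinarith [hδpos k]
      exact (aux_step f hf_meas hf_loc m hm hm_inv α hα _ _ ha' hab' i j).symm
    rw [Finset.sum_congr rfl hterm]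
    have htel := Finset.sum_range_sub' (fun jj : ℕ => α (t + (jj : ℝ) * δ k) i j) (k + 1)
    push_cast at htel
    rw [htel]
    have e1 : t + (0 : ℝ) * δ k = t := by ring
    have e2 : t + ((k : ℝ) + 1) * δ k = s := by linarith [hδtot k]
    rw [e1, e2]
  have hαc : ∀ p q : Fin n, ContinuousOn (fun u => α u p q) (Set.Ici t) :=
    fun p q => aux_cont f hf_meas hf_loc m hm hm_inv α hα t ht p q
  have hbdd : ∃ C : ℝ, 0 ≤ C ∧ ∀ v ∈ Set.Icc t s, ∀ p q : Fin n, |α v p q| ≤ C := by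
    have h1 : ∀ p q : Fin n, ∃ Cpq : ℝ, ∀ v ∈ Set.Icc t s, |α v p q| ≤ Cpq := by
      intro p q
      obtain ⟨Cpq, hCpq⟩ := isCompact_Icc.exists_bound_of_continuousOn
        ((hαc p q).mono Set.Icc_subset_Ici_self)
      exact ⟨Cpq, fun v hv => by simpa [Real.norm_eq_abs] using hCpq v hv⟩
    choose C0 hC0 using h1
    refine ⟨∑ p : Fin n, ∑ q : Fin n, max (C0 p q) 0, ?_, ?_⟩
    · exact Finset.sum_nonneg fun p _ => Finset.sum_nonneg fun q _ => le_max_right _ _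
    · intro v hv p q
      calc |α v p q| ≤ max (C0 p q) 0 := le_trans (hC0 p q v hv) (le_max_left _ _)
        _ ≤ ∑ q' : Fin n, max (C0 p q') 0 :=
            Finset.single_le_sum (f := fun q' => max (C0 p q') 0)
              (fun _ _ => le_max_right _ _) (Finset.mem_univ q)
        _ ≤ ∑ p' : Fin n, ∑ q' : Fin n, max (C0 p' q') 0 :=
            Finset.single_le_sum (f := fun p' => ∑ q' : Fin n, max (C0 p' q') 0)
              (fun p' _ => Finset.sum_nonneg fun _ _ => le_max_right _ _) (Finset.mem_univ p)
  obtain ⟨C, hCnn, hC⟩ := hbdd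
  set B : ℝ → ℝ := fun u => C ^ 2 * ((∑ p, f u p ^ 2) * n) with hBdef
  have hBint : IntegrableOn B (Set.Ioc t s) := by
    have h1 : IntegrableOn (fun u => ∑ p, f u p ^ 2) (Set.Ioc t s) :=
      IntegrableOn.mono_set (integrable_finset_sum _ fun p _ => hf_loc p s (ht.trans hts))
        (Set.Ioc_subset_Ioc ht.le le_rfl)
    exact (h1.mul_const _).const_mul _
  have hbnd : ∀ v w : ℝ, v ∈ Set.Icc t s → w ∈ Set.Icc t s → ∀ u : ℝ,
      |(α v).mulVec (f u) i * Matrix.vecMul (f u) (α w) j| ≤ B u := by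
    intro v w hv hw u
    have h1 : |(α v).mulVec (f u) i| ≤ C * ∑ p, |f u p| := by
      simp only [Matrix.mulVec, dotProduct]
      calc |∑ p, α v i p * f u p| ≤ ∑ p, |α v i p * f u p| := Finset.abs_sum_le_sum_abs _ _
        _ ≤ ∑ p, C * |f u p| := Finset.sum_le_sum fun p _ => by
            rw [abs_mul]
            exact mul_le_mul_of_nonneg_right (hC v hv i p) (abs_nonneg _)
        _ = C * ∑ p, |f u p| := by rw [Finset.mul_sum]
    have h2 : |Matrix.vecMul (f u) (α w) j| ≤ (∑ q, |f u q|) * C := by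
      simp only [Matrix.vecMul, dotProduct]
      calc |∑ q, f u q * α w q j| ≤ ∑ q, |f u q * α w q j| := Finset.abs_sum_le_sum_abs _ _
        _ ≤ ∑ q, |f u q| * C := Finset.sum_le_sum fun q _ => by
            rw [abs_mul]
            exact mul_le_mul_of_nonneg_left (hC w hw q j) (abs_nonneg _)
        _ = (∑ q, |f u q|) * C := by rw [Finset.sum_mul]
    have hS : (∑ p, |f u p|) ^ 2 ≤ (∑ p, f u p ^ 2) * n := by
      have hcs := Finset.sum_mul_sq_le_sq_mul_sq Finset.univ (fun p => |f u p|) (fun _ => 1)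
      simpa [sq_abs] using hcs
    have hSnn : (0 : ℝ) ≤ ∑ p, |f u p| := Finset.sum_nonneg fun _ _ => abs_nonneg _
    calc |(α v).mulVec (f u) i * Matrix.vecMul (f u) (α w) j|
        = |(α v).mulVec (f u) i| * |Matrix.vecMul (f u) (α w) j| := abs_mul _ _
      _ ≤ (C * ∑ p, |f u p|) * ((∑ q, |f u q|) * C) :=
          mul_le_mul h1 h2 (abs_nonneg _) (by positivity)
      _ = C ^ 2 * (∑ p, |f u p|) ^ 2 := by ring
      _ ≤ C ^ 2 * ((∑ p, f u p ^ 2) * n) :=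
          mul_le_mul_of_nonneg_left hS (by positivity)
  have hδ0 : Tendsto δ atTop (𝓝 0) := by
    have hcomp : δ = (fun k : ℕ => (s - t) / k) ∘ (fun k : ℕ => k + 1) := by
      funext k
      simp only [hδdef, Function.comp_apply]
      push_cast
      ring
    rw [hcomp]
    exact (tendsto_const_div_atTop_nhds_zero_nat _).comp (tendsto_add_atTop_nat 1)
  have hlim : ∀ u ∈ Set.Ioo t s, Tendsto (fun k => G k u) atTop
      (𝓝 ((α u).mulVec (f u) i * Matrix.vecMul (f u) (α u) j)) := by
    intro u hu
    have huIoc : u ∈ Set.Ioc t s := ⟨hu.1, hu.2.le⟩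
    have hL : Tendsto (fun k => pt k u) atTop (𝓝 u) := by
      have hg : Tendsto (fun k => u - δ k) atTop (𝓝 u) := by
        simpa using tendsto_const_nhds.sub hδ0
      exact tendsto_of_tendsto_of_tendsto_of_le_of_le hg tendsto_const_nhds
        (fun k => (hceil k u huIoc).2.1) (fun k => ((hceil k u huIoc).2.2.1).le)
    have hR : Tendsto (fun k => pt k u + δ k) atTop (𝓝 u) := by
      simpa using hL.add hδ0
    have hca : ∀ p q : Fin n, ContinuousAt (fun v => α v p q) u :=
      fun p q => (hαc p q u hu.1.le).continuousAt (Ici_mem_nhds hu.1)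
    simp only [hGdef, Matrix.mulVec, Matrix.vecMul, dotProduct]
    exact Tendsto.mul
      (tendsto_finset_sum _ fun p _ => ((hca i p).tendsto.comp hL).mul_const _)
      (tendsto_finset_sum _ fun q _ => Tendsto.const_mul _ ((hca q j).tendsto.comp hR))
  have hmeasIoo : ∀ k, AEStronglyMeasurable (G k) (volume.restrict (Set.Ioo t s)) :=
    fun k => ((hGint k).mono_set Set.Ioo_subset_Ioc_self).aestronglyMeasurable
  have hBintIoo : IntegrableOn B (Set.Ioo t s) := hBint.mono_set Set.Ioo_subset_Ioc_self
  have hbd : ∀ k, ∀ᵐ u ∂(volume.restrict (Set.Ioo t s)), ‖G k u‖ ≤ B u := by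
    intro k
    refine ae_restrict_of_forall_mem measurableSet_Ioo ?_
    intro u hu
    have huIoc : u ∈ Set.Ioc t s := ⟨hu.1, hu.2.le⟩
    obtain ⟨h1, h2, h3, h4, h5⟩ := hceil k u huIoc
    rw [Real.norm_eq_abs]
    exact hbnd _ _ ⟨h1, by linarith [huIoc.2]⟩ ⟨by linarith [hδpos k], h5⟩ u
  have hlimae : ∀ᵐ u ∂(volume.restrict (Set.Ioo t s)),
      Tendsto (fun k => G k u) atTop
        (𝓝 ((α u).mulVec (f u) i * Matrix.vecMul (f u) (α u) j)) :=
    ae_restrict_of_forall_mem measurableSet_Ioo hlim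
  have hDCT := MeasureTheory.tendsto_integral_of_dominated_convergence B hmeasIoo hBintIoo
    hbd hlimae
  have hconst : ∀ k : ℕ, (∫ u in Set.Ioo t s, G k u) = α t i j - α s i j := by
    intro k
    rw [← MeasureTheory.integral_Ioc_eq_integral_Ioo]
    exact hGval k
  simp only [hconst] at hDCT
  have heqIoo : (∫ u in Set.Ioo t s, (α u).mulVec (f u) i * Matrix.vecMul (f u) (α u) j)
      = α t i j - α s i j := tendsto_nhds_unique hDCT tendsto_const_nhds
  have htmeas : AEStronglyMeasurable
      (fun u => (α u).mulVec (f u) i * Matrix.vecMul (f u) (α u) j)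
      (volume.restrict (Set.Ioc t s)) := by
    have hres : ∀ p q : Fin n, AEMeasurable (fun u => α u p q)
        (volume.restrict (Set.Ioc t s)) := by
      intro p q
      exact ((hαc p q).aemeasurable measurableSet_Ici).mono_measure
        (Measure.restrict_mono (fun x hx => hx.1.le) le_rfl)
    have h1 : AEMeasurable (fun u => ∑ p, α u i p * f u p)
        (volume.restrict (Set.Ioc t s)) :=
      Finset.aemeasurable_fun_sum _ fun p _ => (hres i p).mul (hf_meas p).aemeasurable
    have h2 : AEMeasurable (fun u => ∑ q, f u q * α u q j)
        (volume.restrict (Set.Ioc t s)) :=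
      Finset.aemeasurable_fun_sum _ fun q _ => (hf_meas q).aemeasurable.mul (hres q j)
    have := (h1.mul h2).aestronglyMeasurable
    simpa only [Matrix.mulVec, Matrix.vecMul, dotProduct, Pi.mul_def] using this
  have htint : IntegrableOn
      (fun u => (α u).mulVec (f u) i * Matrix.vecMul (f u) (α u) j) (Set.Ioc t s) := by
    refine Integrable.mono' hBint htmeas ?_
    refine ae_restrict_of_forall_mem measurableSet_Ioc fun u hu => ?_
    rw [Real.norm_eq_abs]
    exact hbnd u u ⟨hu.1.le, hu.2⟩ ⟨hu.1.le, hu.2⟩ u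
  refine ⟨htint, ?_⟩
  rw [MeasureTheory.integral_Ioc_eq_integral_Ioo]
  exact heqIoo.symm


/-- For every t > 0, the entrywise improper integral ∫_t^∞ φ(u)·φ(u)ᵀ du converges, and
α_t = ∫_t^∞ φ(u)·φ(u)ᵀ du + α_∞, where α_∞ = lim_{s→∞} α_s. -/
theorem alpha_eq_integral_phi_phiT_add_alphaInf
    (n : ℕ) (hn : 1 ≤ n)
    (f : ℝ → Fin n → ℝ)
    (hf_meas : ∀ i, Measurable fun s => f s i)
    (hf_loc : ∀ i, ∀ t > (0 : ℝ), IntegrableOn (fun s => (f s i) ^ 2) (Set.Ioc 0 t))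
    (m : ℝ → Matrix (Fin n) (Fin n) ℝ)
    (hm : ∀ t, m t = Matrix.of fun i j => ∫ s in Set.Ioc 0 t, f s i * f s j)
    (hm_inv : ∀ t > (0 : ℝ), IsUnit (m t))
    (α : ℝ → Matrix (Fin n) (Fin n) ℝ)
    (hα : ∀ t, α t = (m t)⁻¹)
    (φ : ℝ → Fin n → ℝ)
    (hφ : ∀ t, φ t = (α t).mulVec (f t))
    (A : Matrix (Fin n) (Fin n) ℝ)
    (hA : ∀ i j, Tendsto (fun s => α s i j) atTop (𝓝 (A i j))) :
    ∀ t > (0 : ℝ),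
      (∀ i j, IntegrableOn (fun u => φ u i * φ u j) (Set.Ioi t)) ∧
      α t = (Matrix.of fun i j => ∫ u in Set.Ioi t, φ u i * φ u j) + A := by
  have hsymm : ∀ u : ℝ, 0 < u → (f u) ᵥ* (α u) = (α u) *ᵥ (f u) := by
    intro u hu
    have hms : (m u)ᵀ = m u := by
      rw [hm]
      ext p q
      simp only [Matrix.transpose_apply, Matrix.of_apply]
      congr 1
      funext v
      ring
    have hαs : (α u)ᵀ = α u := by
      rw [hα, Matrix.transpose_nonsing_inv, hms]
    rw [← Matrix.vecMul_transpose, hαs]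
  intro t ht
  have hkey' : ∀ s : ℝ, t < s → ∀ i j : Fin n,
      IntegrableOn (fun u => φ u i * φ u j) (Set.Ioc t s) ∧
        α t i j - α s i j = ∫ u in Set.Ioc t s, φ u i * φ u j := by
    intro s hs i j
    have hk := aux_key f hf_meas hf_loc m hm hm_inv α hα t s ht hs i j
    have heqon : Set.EqOn (fun u => (α u).mulVec (f u) i * Matrix.vecMul (f u) (α u) j)
        (fun u => φ u i * φ u j) (Set.Ioc t s) := by
      intro u hu
      have hu0 : 0 < u := ht.trans hu.1
      simp only
      rw [hφ, hsymm u hu0]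
    exact ⟨hk.1.congr_fun heqon measurableSet_Ioc,
      hk.2.trans (setIntegral_congr_fun measurableSet_Ioc heqon)⟩
  -- integrability of diagonal products on Ioi t
  have hdiag : ∀ i : Fin n, IntegrableOn (fun u => φ u i * φ u i) (Set.Ioi t) := by
    intro i
    refine MeasureTheory.integrableOn_Ioi_of_intervalIntegral_norm_bounded
      (α t i i - A i i + 1) t (b := fun s : ℝ => s) (l := atTop) ?_ tendsto_id ?_
    · intro s
      rcases lt_or_ge t s with h | h
      · exact (hkey' s h i i).1
      · rw [Set.Ioc_eq_empty (not_lt.mpr h)]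
        exact integrableOn_empty
    · have h1 : ∀ᶠ s : ℝ in atTop, t < s := eventually_gt_atTop t
      have h2 : ∀ᶠ s : ℝ in atTop, A i i - 1 < α s i i :=
        (hA i i).eventually (eventually_gt_nhds (by linarith))
      filter_upwards [h1, h2] with s hs1 hs2
      rw [intervalIntegral.integral_of_le hs1.le]
      have heq : (∫ x in Set.Ioc t s, ‖φ x i * φ x i‖) = ∫ x in Set.Ioc t s, φ x i * φ x i := by
        congr 1
        funext x
        rw [Real.norm_eq_abs, abs_mul_self]
      rw [heq, ← (hkey' s hs1 i i).2]
      linarith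
  -- measurability of φ products on Ioi t
  have hαae : ∀ p q : Fin n, AEMeasurable (fun u => α u p q) (volume.restrict (Set.Ioi t)) := by
    intro p q
    exact ((aux_cont f hf_meas hf_loc m hm hm_inv α hα t ht p q).aemeasurable
      measurableSet_Ici).mono_measure (Measure.restrict_mono Set.Ioi_subset_Ici_self le_rfl)
  have hφae : ∀ i : Fin n, AEMeasurable (fun u => φ u i) (volume.restrict (Set.Ioi t)) := by
    intro i
    have hrw : (fun u => φ u i) = fun u => ∑ p, α u i p * f u p := by
      funext u
      rw [hφ]
      rfl
    rw [hrw]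
    exact Finset.aemeasurable_fun_sum _ fun p _ => (hαae i p).mul (hf_meas p).aemeasurable
  have hφint : ∀ i j : Fin n, IntegrableOn (fun u => φ u i * φ u j) (Set.Ioi t) := by
    intro i j
    refine Integrable.mono' ((hdiag i).add (hdiag j))
      ((hφae i).mul (hφae j)).aestronglyMeasurable ?_
    refine Filter.Eventually.of_forall fun u => ?_
    rw [Real.norm_eq_abs]
    have : |φ u i * φ u j| ≤ φ u i * φ u i + φ u j * φ u j := by
      refine abs_le.mpr ⟨by nlinarith [sq_nonneg (φ u i + φ u j)],
        by nlinarith [sq_nonneg (φ u i - φ u j)]⟩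
    simpa using this
  refine ⟨hφint, ?_⟩
  -- the identity
  have hIoi : ∀ i j : Fin n, (∫ u in Set.Ioi t, φ u i * φ u j) = α t i j - A i j := by
    intro i j
    set S : ℕ → Set ℝ := fun k => Set.Ioc t (t + 1 + k) with hSdef
    have hSm : ∀ k, MeasurableSet (S k) := fun k => measurableSet_Ioc
    have hmonoS : Monotone S := by
      intro k l hkl
      refine Set.Ioc_subset_Ioc le_rfl ?_
      have : (k : ℝ) ≤ l := Nat.cast_le.mpr hkl
      linarith
    have hUnion : (⋃ k, S k) = Set.Ioi t := by
      ext u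
      simp only [hSdef, Set.mem_iUnion, Set.mem_Ioc, Set.mem_Ioi]
      constructor
      · rintro ⟨k, h, _⟩; exact h
      · intro h
        obtain ⟨k, hk⟩ := exists_nat_ge (u - t - 1)
        exact ⟨k, h, by linarith⟩
    have hint' : IntegrableOn (fun u => φ u i * φ u j) (⋃ k, S k) := by
      rw [hUnion]; exact hφint i j
    have htend := MeasureTheory.tendsto_setIntegral_of_monotone hSm hmonoS hint'
    have hts : ∀ k : ℕ, t < t + 1 + k := by
      intro k
      have : (0 : ℝ) ≤ k := Nat.cast_nonneg k
      linarith
    have hval : ∀ k : ℕ, (∫ u in S k, φ u i * φ u j) = α t i j - α (t + 1 + k) i j :=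
      fun k => ((hkey' (t + 1 + k) (hts k) i j).2).symm
    simp only [hval] at htend
    have hseq : Tendsto (fun k : ℕ => t + 1 + (k : ℝ)) atTop atTop :=
      tendsto_atTop_add_const_left _ _ tendsto_natCast_atTop_atTop
    have hval2 : Tendsto (fun k : ℕ => α t i j - α (t + 1 + (k : ℝ)) i j) atTop
        (𝓝 (α t i j - A i j)) := tendsto_const_nhds.sub ((hA i j).comp hseq)
    have := tendsto_nhds_unique htend hval2
    rw [hUnion] at this
    exact this
  ext i j
  simp only [Matrix.add_apply, Matrix.of_apply]
  linarith [hIoi i j]
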